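/- Let K ≥ 1 and let P(z) = ∑_{k=1}^K a_k (1−z)^k be a polynomial with complex coefficients such that Re P(z) ≥ 0 for every z in the open unit disc 𝔻. Then either a_k = 0 for all k = 1, …, K, or a_1 is a positive real number (i.e. Im a_1 = 0 and Re a_1 > 0). -/

import Mathlib

open Filter Topology

lemma lemA (K m : ℕ) (hm : m ∈ Finset.Icc 1 K) (b : ℕ → ℝ)
    (hb : ∀ k ∈ Finset.Icc 1 K, k < m → b k = 0)
    (ε : ℝ) (hε : 0 < ε)
    (h : ∀ t : ℝ, 0 < t → t < ε → 0 ≤ ∑ k ∈ Finset.Icc 1 K, b k * t ^ k) :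
    0 ≤ b m := by
  simp only [Finset.mem_Icc] at hm
  set f : ℝ → ℝ := fun t => ∑ k ∈ Finset.Icc m K, b k * t ^ (k - m) with hf
  have hcont : Continuous f := by
    apply continuous_finset_sum
    intro k _
    exact (continuous_const.mul (continuous_pow _))
  have hf0 : f 0 = b m := by
    show (∑ k ∈ Finset.Icc m K, b k * (0:ℝ) ^ (k - m)) = b m
    rw [Finset.sum_eq_single m]
    · simp
    · intro k hk hkm
      simp only [Finset.mem_Icc] at hk
      have : 0 < k - m := Nat.sub_pos_of_lt (lt_of_le_of_ne hk.1 (Ne.symm hkm))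
      rw [zero_pow this.ne', mul_zero]
    · intro hmm
      simp [Finset.mem_Icc, hm.2] at hmm
  have hfpos : ∀ t : ℝ, 0 < t → t < ε → 0 ≤ f t := by
    intro t ht htε
    have key : t ^ m * f t = ∑ k ∈ Finset.Icc 1 K, b k * t ^ k := by
      show t ^ m * (∑ k ∈ Finset.Icc m K, b k * t ^ (k - m)) = _
      rw [Finset.mul_sum]
      have h1 : ∀ k ∈ Finset.Icc m K, t ^ m * (b k * t ^ (k - m)) = b k * t ^ k := by
        intro k hk
        simp only [Finset.mem_Icc] at hk
        rw [mul_comm (t ^ m), mul_assoc, ← pow_add]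
        rw [Nat.sub_add_cancel hk.1]
      rw [Finset.sum_congr rfl h1]
      rw [← Finset.sum_subset (Finset.Icc_subset_Icc_left hm.1)]
      intro k hk hk2
      simp only [Finset.mem_Icc] at hk hk2
      have : k < m := by omega
      rw [hb k (Finset.mem_Icc.mpr hk) this, zero_mul]
    have h2 : 0 ≤ t ^ m * f t := key ▸ h t ht htε
    exact nonneg_of_mul_nonneg_right h2 (pow_pos ht m)
  have h1 : Tendsto f (𝓝[>] (0:ℝ)) (𝓝 (f 0)) := (hcont.tendsto 0).mono_left nhdsWithin_le_nhds
  have h2 : ∀ᶠ t in 𝓝[>] (0:ℝ), 0 ≤ f t := by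
    filter_upwards [Ioo_mem_nhdsGT_of_mem (by constructor <;> simp [hε] : (0:ℝ) ∈ Set.Ico 0 ε)] with t ht
    exact hfpos t ht.1 ht.2
  rw [← hf0]
  exact ge_of_tendsto h1 h2

lemma lemB (K m : ℕ) (hm : m ∈ Finset.Icc 1 K) (a : ℕ → ℂ)
    (hP : ∀ z : ℂ, ‖z‖ < 1 → 0 ≤ (∑ k ∈ Finset.Icc 1 K, a k * (1 - z) ^ k).re)
    (hmin : ∀ k ∈ Finset.Icc 1 K, k < m → a k = 0) :
    ∀ θ ∈ Set.Icc (-(Real.pi/2)) (Real.pi/2),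
      0 ≤ (a m * Complex.exp ((θ * m : ℝ) * Complex.I)).re := by
  have hopen : ∀ θ ∈ Set.Ioo (-(Real.pi/2)) (Real.pi/2),
      0 ≤ (a m * Complex.exp ((θ * m : ℝ) * Complex.I)).re := by
    intro θ hθ
    have hcos : 0 < Real.cos θ := Real.cos_pos_of_mem_Ioo hθ
    refine lemA K m hm (fun k => (a k * Complex.exp ((θ * k : ℝ) * Complex.I)).re) ?_
      (Real.cos θ) hcos ?_
    · intro k hk hkm
      simp only [hmin k hk hkm, zero_mul, Complex.zero_re]
    · intro t ht htc
      set w : ℂ := (t : ℂ) * Complex.exp ((θ : ℝ) * Complex.I) with hw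
      have hre : ((1:ℂ) - w).re = 1 - t * Real.cos θ := by
        simp [hw, Complex.sub_re, Complex.mul_re, Complex.exp_ofReal_mul_I_re,
          Complex.exp_ofReal_mul_I_im]
      have him : ((1:ℂ) - w).im = -(t * Real.sin θ) := by
        simp [hw, Complex.sub_im, Complex.mul_im, Complex.exp_ofReal_mul_I_re,
          Complex.exp_ofReal_mul_I_im]
      have hsq : ‖(1:ℂ) - w‖ ^ 2 < 1 := by
        rw [Complex.sq_norm, Complex.normSq_apply, hre, him]
        have hpy := Real.sin_sq_add_cos_sq θ
        have key : (1 - t * Real.cos θ) * (1 - t * Real.cos θ)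
            + -(t * Real.sin θ) * -(t * Real.sin θ) = 1 - t * (2 * Real.cos θ - t) := by
          linear_combination t ^ 2 * hpy
        rw [key]
        have := mul_pos ht (show (0:ℝ) < 2 * Real.cos θ - t by linarith)
        linarith
      have hnorm : ‖(1:ℂ) - w‖ < 1 :=
        lt_of_pow_lt_pow_left₀ 2 zero_le_one (by rw [one_pow]; exact hsq)
      have hP' := hP (1 - w) hnorm
      have hsum : (∑ k ∈ Finset.Icc 1 K, a k * (1 - (1 - w)) ^ k).re
          = ∑ k ∈ Finset.Icc 1 K, (a k * Complex.exp ((θ * k : ℝ) * Complex.I)).re * t ^ k := by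
        rw [Complex.re_sum]
        refine Finset.sum_congr rfl fun k _ => ?_
        have h1 : (1 : ℂ) - (1 - w) = w := by ring
        have h2 : Complex.exp ((θ : ℝ) * Complex.I) ^ k
            = Complex.exp ((θ * k : ℝ) * Complex.I) := by
          rw [← Complex.exp_nat_mul]
          congr 1
          push_cast
          ring
        rw [h1, hw, mul_pow, h2]
        rw [show a k * ((t:ℂ) ^ k * Complex.exp ((θ * k : ℝ) * Complex.I))
            = ((t ^ k : ℝ) : ℂ) * (a k * Complex.exp ((θ * k : ℝ) * Complex.I)) from by
          push_cast; ring]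
        rw [Complex.re_ofReal_mul]
        ring
      rw [hsum] at hP'
      exact hP'
  intro θ hθ
  have hC : Continuous fun θ : ℝ => (a m * Complex.exp ((θ * m : ℝ) * Complex.I)).re := by
    apply Complex.continuous_re.comp
    apply continuous_const.mul
    exact Complex.continuous_exp.comp
      ((Complex.continuous_ofReal.comp (continuous_id.mul continuous_const)).mul continuous_const)
  have hclosed : IsClosed {θ : ℝ | 0 ≤ (a m * Complex.exp ((θ * m : ℝ) * Complex.I)).re} :=
    isClosed_le continuous_const hC
  have hsub : Set.Icc (-(Real.pi/2)) (Real.pi/2)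
      ⊆ {θ : ℝ | 0 ≤ (a m * Complex.exp ((θ * m : ℝ) * Complex.I)).re} := by
    rw [← closure_Ioo (show -(Real.pi/2) ≠ Real.pi/2 by
      have := Real.pi_pos; intro h; linarith)]
    exact hclosed.closure_subset_iff.mpr (fun x hx => hopen x hx)
  exact hsub hθ

theorem stmt14 (K : ℕ) (hK : 1 ≤ K) (a : ℕ → ℂ)
    (hP : ∀ z : ℂ, ‖z‖ < 1 → 0 ≤ (∑ k ∈ Finset.Icc 1 K, a k * (1 - z) ^ k).re) :
    (∀ k ∈ Finset.Icc 1 K, a k = 0) ∨ ((a 1).im = 0 ∧ 0 < (a 1).re) := by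
  by_cases hall : ∀ k ∈ Finset.Icc 1 K, a k = 0
  · exact Or.inl hall
  right
  push_neg at hall
  obtain ⟨k0, hk0, hk0ne⟩ := hall
  set T := (Finset.Icc 1 K).filter (fun k => a k ≠ 0) with hT
  have hTne : T.Nonempty := ⟨k0, by simp [hT, Finset.mem_Icc.mp hk0, hk0ne]⟩
  set m := T.min' hTne with hmdef
  have hmT : m ∈ T := T.min'_mem hTne
  have hmIcc : m ∈ Finset.Icc 1 K := (Finset.mem_filter.mp hmT).1
  have hma : a m ≠ 0 := (Finset.mem_filter.mp hmT).2
  have hmin : ∀ k ∈ Finset.Icc 1 K, k < m → a k = 0 := by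
    intro k hk hkm
    by_contra hne
    exact absurd (T.min'_le k (Finset.mem_filter.mpr ⟨hk, hne⟩)) (by omega)
  have hB := lemB K m hmIcc a hP hmin
  have hpos := Real.pi_pos
  rcases eq_or_lt_of_le (Finset.mem_Icc.mp hmIcc).1 with h1 | h2
  · -- m = 1
    have hm1 : m = 1 := h1.symm
    rw [hm1] at hB hma
    have e0 := hB 0 ⟨by linarith, by linarith⟩
    have ep := hB (Real.pi/2) ⟨by linarith, le_refl _⟩
    have en := hB (-(Real.pi/2)) ⟨le_refl _, by linarith⟩
    simp only [Nat.cast_one, mul_one, Complex.ofReal_zero, zero_mul, Complex.exp_zero] at e0 ep en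
    rw [Complex.exp_mul_I] at ep en
    simp only [Complex.cos_neg, Complex.sin_neg, ← Complex.ofReal_cos, ← Complex.ofReal_sin, Real.cos_pi_div_two,
      Real.sin_pi_div_two, Real.cos_neg, Real.sin_neg, Complex.ofReal_zero, Complex.ofReal_one,
      Complex.ofReal_neg, zero_add, one_mul, neg_zero, neg_mul] at ep en
    have him : (a 1).im = 0 := by
      have hep : (a 1 * Complex.I).re = -(a 1).im := by simp [Complex.mul_re]
      have hen : (a 1 * -Complex.I).re = (a 1).im := by simp [Complex.mul_re]
      rw [hep] at ep
      rw [hen] at en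
      linarith
    refine ⟨him, ?_⟩
    rcases lt_or_eq_of_le e0 with h | h
    · exact h
    · exfalso
      exact hma (Complex.ext h.symm him)
  · -- 2 ≤ m
    exfalso
    set z : ℂ := -(starRingEnd ℂ (a m)) with hz
    have hzne : z ≠ 0 := by
      simp [hz, hma]
    set φ := Complex.arg z with hφ
    have hφmem := Complex.arg_mem_Ioc z
    rw [← hφ] at hφmem
    have hmpos : (0:ℝ) < m := by positivity
    have hm2 : (2:ℝ) ≤ m := by exact_mod_cast h2
    have hθmem : φ / m ∈ Set.Icc (-(Real.pi/2)) (Real.pi/2) := by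
      constructor
      · rw [le_div_iff₀ hmpos]
        nlinarith [hφmem.1.le]
      · rw [div_le_iff₀ hmpos]
        nlinarith [hφmem.2]
    have hkey := hB (φ / m) hθmem
    have hmul : φ / m * m = φ := div_mul_cancel₀ φ (by positivity)
    rw [hmul] at hkey
    have habs : (‖z‖ : ℂ) ≠ 0 := by
      exact_mod_cast (norm_ne_zero_iff.mpr hzne)
    have hexp : Complex.exp ((φ:ℝ) * Complex.I) = z / (‖z‖ : ℂ) := by
      rw [eq_div_iff habs, mul_comm]
      exact Complex.norm_mul_exp_arg_mul_I z
    rw [hexp] at hkey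
    have hval : a m * (z / (‖z‖ : ℂ))
        = ((-(Complex.normSq (a m)) / ‖z‖ : ℝ) : ℂ) := by
      rw [hz]
      push_cast
      rw [mul_div_assoc']
      congr 1
      rw [mul_neg, Complex.mul_conj]
    rw [hval] at hkey
    rw [Complex.ofReal_re] at hkey
    have h1 : 0 < Complex.normSq (a m) := Complex.normSq_pos.mpr hma
    have h2' : 0 < ‖z‖ := norm_pos_iff.mpr hzne
    have : -(Complex.normSq (a m)) / ‖z‖ < 0 := div_neg_of_neg_of_pos (by linarith) h2'
    linarith
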